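/- For every transition graph G with n vertices and label universum of size m, there exists an acyclic transition graph G′ over the same universum (a transition graph whose underlying directed graph contains no directed cycle), with at most n·((m+1)·n + 1) + 1 vertices, such that F(G′) = F(G). -/

import Mathlib

structure TransitionGraph (V E U : Type*) where
  src : E → V
  tgt : E → V
  s : V
  t : V
  lab : E → Option U

namespace TransitionGraph

variable {V E U : Type*}

def IsSTPath (G : TransitionGraph V E U) (P : List E) : Prop :=
  List.Chain' (fun e f => G.tgt e = G.src f) P ∧
    ((P = [] ∧ G.s = G.t) ∨
      ∃ h : P ≠ [], G.src (P.head h) = G.s ∧ G.tgt (P.getLast h) = G.t)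

def labelSet [DecidableEq U] (G : TransitionGraph V E U) (P : List E) : Finset U :=
  (P.filterMap G.lab).toFinset

def labelFamily [DecidableEq U] (G : TransitionGraph V E U) : Set (Finset U) :=
  {S | ∃ P : List E, G.IsSTPath P ∧ G.labelSet P = S}

end TransitionGraph

/-- The `ε`-separability property for a family of finite sets. -/
def SepProperty {α : Type*} [DecidableEq α] (ε : ℝ) (F : Set (Finset α)) : Prop :=
  ∀ S₁ ∈ F, ∀ S₂ ∈ F, S₁ ≠ S₂ →
    (6 : ℝ) ≤ ε * (max S₁.card S₂.card : ℕ) →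
    ε * (max S₁.card S₂.card : ℕ) < ((symmDiff S₁ S₂).card : ℝ)


/-- A transition graph is acyclic if its underlying directed graph has no directed cycle. -/
def TransitionGraph.Acyclic {V E U : Type*} (G : TransitionGraph V E U) : Prop :=
  ¬ ∃ (P : List E) (h : P ≠ []),
      List.Chain' (fun e f => G.tgt e = G.src f) P ∧
      G.tgt (P.getLast h) = G.src (P.head h)

namespace TransitionGraph

variable {V E U : Type*}

/-- Auxiliary: a walk from `a` to `b`. -/
def Walk (G : TransitionGraph V E U) (a b : V) (P : List E) : Prop :=
  List.Chain' (fun e f => G.tgt e = G.src f) P ∧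
    ((P = [] ∧ a = b) ∨
      ∃ h : P ≠ [], G.src (P.head h) = a ∧ G.tgt (P.getLast h) = b)

lemma isSTPath_iff_walk (G : TransitionGraph V E U) (P : List E) :
    G.IsSTPath P ↔ G.Walk G.s G.t P := Iff.rfl

lemma walk_nil_iff (G : TransitionGraph V E U) (a b : V) :
    G.Walk a b [] ↔ a = b := by
  constructor
  · rintro ⟨-, ⟨-, h⟩ | ⟨h, -⟩⟩
    · exact h
    · exact absurd rfl h
  · rintro rfl; exact ⟨List.isChain_nil, Or.inl ⟨rfl, rfl⟩⟩

lemma walk_cons_iff (G : TransitionGraph V E U) (a b : V) (e : E) (P : List E) :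
    G.Walk a b (e :: P) ↔ G.src e = a ∧ G.Walk (G.tgt e) b P := by
  cases P with
  | nil =>
    constructor
    · rintro ⟨-, ⟨h, -⟩ | ⟨h, h1, h2⟩⟩
      · simp at h
      · exact ⟨h1, (G.walk_nil_iff _ _).mpr h2⟩
    · rintro ⟨h1, h2⟩
      rw [walk_nil_iff] at h2
      exact ⟨List.isChain_singleton e, Or.inr ⟨List.cons_ne_nil _ _, h1, h2⟩⟩
  | cons f Q =>
    constructor
    · rintro ⟨hc, ⟨h, -⟩ | ⟨h, h1, h2⟩⟩
      · simp at h
      · replace hc := List.isChain_cons_cons.mp hc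
        refine ⟨h1, hc.2, Or.inr ⟨List.cons_ne_nil _ _, hc.1.symm, ?_⟩⟩
        rwa [List.getLast_cons] at h2
    · rintro ⟨h1, hc, h⟩
      rcases h with ⟨h, -⟩ | ⟨h, h2, h3⟩
      · simp at h
      · refine ⟨List.isChain_cons_cons.mpr ⟨h2.symm, hc⟩,
          Or.inr ⟨List.cons_ne_nil _ _, h1, ?_⟩⟩
        rw [List.getLast_cons]; exact h3

lemma walk_singleton_iff (G : TransitionGraph V E U) (a b : V) (e : E) :
    G.Walk a b [e] ↔ G.src e = a ∧ G.tgt e = b := by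
  rw [walk_cons_iff, walk_nil_iff]

lemma Walk.append {G : TransitionGraph V E U} {a b c : V} {P Q : List E}
    (h1 : G.Walk a b P) (h2 : G.Walk b c Q) : G.Walk a c (P ++ Q) := by
  induction P generalizing a with
  | nil =>
    rw [walk_nil_iff] at h1; subst h1; simpa using h2
  | cons e P ih =>
    rw [walk_cons_iff] at h1
    rw [List.cons_append, walk_cons_iff]
    exact ⟨h1.1, ih h1.2⟩

lemma walk_decomp {G : TransitionGraph V E U} {a c : V} {P Q : List E}
    (h : G.Walk a c (P ++ Q)) : ∃ b, G.Walk a b P ∧ G.Walk b c Q := by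
  induction P generalizing a with
  | nil => exact ⟨a, (G.walk_nil_iff _ _).mpr rfl, by simpa using h⟩
  | cons e P ih =>
    rw [List.cons_append, walk_cons_iff] at h
    obtain ⟨b, hb1, hb2⟩ := ih h.2
    exact ⟨b, (G.walk_cons_iff _ _ _ _).mpr ⟨h.1, hb1⟩, hb2⟩

lemma labelSet_append [DecidableEq U] (G : TransitionGraph V E U) (P Q : List E) :
    G.labelSet (P ++ Q) = G.labelSet P ∪ G.labelSet Q := by
  simp [labelSet]

lemma labelSet_sublist [DecidableEq U] (G : TransitionGraph V E U) {P Q : List E}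
    (h : P.Sublist Q) : G.labelSet P ⊆ G.labelSet Q := by
  intro x hx
  simp only [labelSet, List.mem_toFinset] at *
  exact (h.filterMap _).subset hx

lemma acyclic_of_height (G : TransitionGraph V E U) (h : V → ℕ)
    (hh : ∀ e, h (G.src e) < h (G.tgt e)) : G.Acyclic := by
  have key : ∀ (P : List E) (hp : P ≠ []),
      List.Chain' (fun e f => G.tgt e = G.src f) P →
      h (G.src (P.head hp)) < h (G.tgt (P.getLast hp)) := by
    intro P
    induction P with
    | nil => intro hp; exact absurd rfl hp
    | cons e P ih =>
      intro _ hc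
      cases P with
      | nil => exact hh e
      | cons f Q =>
        replace hc := List.isChain_cons_cons.mp hc
        have h2 := ih (List.cons_ne_nil f Q) hc.2
        calc h (G.src e) < h (G.tgt e) := hh e
          _ = h (G.src f) := by rw [hc.1]
          _ < _ := by rw [List.getLast_cons]; exact h2
  rintro ⟨P, hp, hc, heq⟩
  have := key P hp hc
  rw [heq] at this
  exact lt_irrefl _ this

/-- Transport a transition graph along equivalences of vertex and edge types. -/
def transport (G : TransitionGraph V E U) {V' E' : Type*} (eV : V ≃ V') (eE : E ≃ E') :
    TransitionGraph V' E' U where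
  src := fun e => eV (G.src (eE.symm e))
  tgt := fun e => eV (G.tgt (eE.symm e))
  s := eV G.s
  t := eV G.t
  lab := fun e => G.lab (eE.symm e)

lemma walk_transport (G : TransitionGraph V E U) {V' E' : Type*} (eV : V ≃ V') (eE : E ≃ E')
    {a b : V} {P : List E} (h : G.Walk a b P) :
    (G.transport eV eE).Walk (eV a) (eV b) (P.map eE) := by
  induction P generalizing a with
  | nil =>
    rw [walk_nil_iff] at h; subst h
    simpa using ((G.transport eV eE).walk_nil_iff _ _).mpr rfl
  | cons e P ih =>
    rw [walk_cons_iff] at h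
    rw [List.map_cons, walk_cons_iff]
    constructor
    · simp [transport, h.1]
    · have := ih h.2
      simpa [transport] using this

lemma transport_transport (G : TransitionGraph V E U) {V' E' : Type*}
    (eV : V ≃ V') (eE : E ≃ E') :
    (G.transport eV eE).transport eV.symm eE.symm = G := by
  cases G
  simp only [transport, mk.injEq, Equiv.symm_symm, Equiv.symm_apply_apply]

lemma labelSet_transport [DecidableEq U] (G : TransitionGraph V E U) {V' E' : Type*}
    (eV : V ≃ V') (eE : E ≃ E') (P : List E) :
    (G.transport eV eE).labelSet (P.map eE) = G.labelSet P := by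
  simp [labelSet, transport, List.filterMap_map, Function.comp_def]

lemma labelFamily_transport [DecidableEq U] (G : TransitionGraph V E U) {V' E' : Type*}
    (eV : V ≃ V') (eE : E ≃ E') :
    (G.transport eV eE).labelFamily = G.labelFamily := by
  ext S
  constructor
  · rintro ⟨P', hw, rfl⟩
    rw [isSTPath_iff_walk] at hw
    have h2 := (G.transport eV eE).walk_transport eV.symm eE.symm hw
    rw [transport_transport] at h2
    refine ⟨P'.map eE.symm, ?_, ?_⟩
    · rw [isSTPath_iff_walk]
      simpa [transport] using h2
    · have h3 := G.labelSet_transport eV eE (P'.map eE.symm)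
      simp only [List.map_map] at h3
      simpa using h3.symm
  · rintro ⟨P, hw, rfl⟩
    rw [isSTPath_iff_walk] at hw
    exact ⟨P.map eE, G.walk_transport eV eE hw, G.labelSet_transport eV eE P⟩

/-- The layered (unrolled) version of a transition graph. -/
def layered (G : TransitionGraph V E U) (L : ℕ) :
    TransitionGraph (V × Fin (L + 1) ⊕ Unit) (E × Fin L ⊕ Fin (L + 1)) U where
  src := fun x => match x with
    | .inl (e, i) => .inl (G.src e, i.castSucc)
    | .inr i => .inl (G.t, i)
  tgt := fun x => match x with
    | .inl (e, i) => .inl (G.tgt e, i.succ)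
    | .inr _ => .inr ()
  s := .inl (G.s, 0)
  t := .inr ()
  lab := fun x => match x with
    | .inl (e, _) => G.lab e
    | .inr _ => none

lemma layered_up [DecidableEq U] (G : TransitionGraph V E U) (L : ℕ) (Q : List E) :
    ∀ (a b : V) (i j : Fin (L + 1)), (j : ℕ) = (i : ℕ) + Q.length →
    G.Walk a b Q →
    ∃ P' : List (E × Fin L ⊕ Fin (L + 1)),
      (G.layered L).Walk (.inl (a, i)) (.inl (b, j)) P' ∧
      (G.layered L).labelSet P' = G.labelSet Q := by
  induction Q with
  | nil =>
    intro a b i j hij hw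
    rw [walk_nil_iff] at hw; subst hw
    have : i = j := Fin.ext (by simpa using hij.symm)
    subst this
    exact ⟨[], ((G.layered L).walk_nil_iff _ _).mpr rfl, rfl⟩
  | cons e Q ih =>
    intro a b i j hij hw
    rw [walk_cons_iff] at hw
    have hiL : (i : ℕ) < L := by
      have := j.isLt
      simp [List.length_cons] at hij
      omega
    have hnext : ((⟨(i : ℕ) + 1, by omega⟩ : Fin (L + 1)) : ℕ) = ((⟨(i : ℕ) + 1, by omega⟩ : Fin (L + 1)) : ℕ) := rfl
    obtain ⟨P', hP', hl⟩ := ih (G.tgt e) b ⟨(i : ℕ) + 1, by omega⟩ j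
      (by simp [List.length_cons] at hij ⊢; omega) hw.2
    refine ⟨.inl (e, ⟨(i : ℕ), hiL⟩) :: P', ?_, ?_⟩
    · rw [walk_cons_iff]
      constructor
      · show Sum.inl (G.src e, Fin.castSucc _) = _
        rw [hw.1]
        congr 1
      · show (G.layered L).Walk (Sum.inl (G.tgt e, Fin.succ _)) _ _
        convert hP' using 2
        rfl
    · have hlab : (G.layered L).lab (.inl (e, ⟨(i : ℕ), hiL⟩)) = G.lab e := rfl
      cases he : G.lab e with
      | none =>
        simp only [labelSet, List.filterMap_cons, hlab, he] at *
        exact hl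
      | some u =>
        simp only [labelSet, List.filterMap_cons, hlab, he, List.toFinset_cons] at *
        rw [hl]

lemma layered_down [DecidableEq U] (G : TransitionGraph V E U) (L : ℕ)
    (P' : List (E × Fin L ⊕ Fin (L + 1))) :
    ∀ (v : V) (i : Fin (L + 1)),
    (G.layered L).Walk (.inl (v, i)) (.inr ()) P' →
    ∃ Q : List E, G.Walk v G.t Q ∧ G.labelSet Q = (G.layered L).labelSet P' := by
  induction P' with
  | nil =>
    intro v i hw
    rw [walk_nil_iff] at hw
    exact absurd hw (by simp)
  | cons x P' ih =>
    intro v i hw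
    rw [walk_cons_iff] at hw
    obtain ⟨h1, hw2⟩ := hw
    match x with
    | .inl (e, k) =>
      have hv : G.src e = v := by
        have : (Sum.inl (G.src e, k.castSucc) : V × Fin (L + 1) ⊕ Unit) = Sum.inl (v, i) := h1
        simpa using congrArg (fun z => (Sum.getLeft? z).map Prod.fst) this
      obtain ⟨Q, hQ, hl⟩ := ih (G.tgt e) k.succ hw2
      refine ⟨e :: Q, (G.walk_cons_iff _ _ _ _).mpr ⟨hv, hQ⟩, ?_⟩
      have hlab : (G.layered L).lab (.inl (e, k)) = G.lab e := rfl
      cases he : G.lab e with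
      | none =>
        simp only [labelSet, List.filterMap_cons, hlab, he] at *
        exact hl
      | some u =>
        simp only [labelSet, List.filterMap_cons, hlab, he, List.toFinset_cons] at *
        rw [hl]
    | .inr k =>
      have hv : v = G.t := by
        have : (Sum.inl (G.t, k) : V × Fin (L + 1) ⊕ Unit) = Sum.inl (v, i) := h1
        simpa using (congrArg (fun z => (Sum.getLeft? z).map Prod.fst) this).symm
      have hP' : P' = [] := by
        cases P' with
        | nil => rfl
        | cons y R =>
          exfalso
          rw [walk_cons_iff] at hw2
          have := hw2.1
          rcases y with ⟨e2, k2⟩ | k2 <;> simp [layered] at this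
      subst hP'
      subst hv
      exact ⟨[], (G.walk_nil_iff _ _).mpr rfl, rfl⟩

lemma shorten [Fintype V] [Fintype U] [DecidableEq U] (G : TransitionGraph V E U) :
    ∀ (N : ℕ) (P : List E), P.length = N → G.Walk G.s G.t P →
    ∃ Q : List E, G.Walk G.s G.t Q ∧ G.labelSet Q = G.labelSet P ∧
      Q.length ≤ (Fintype.card U + 1) * Fintype.card V := by
  intro N
  induction N using Nat.strong_induction_on with
  | _ N ih =>
  intro P hlen hw
  subst hlen
  by_cases hN : P.length ≤ (Fintype.card U + 1) * Fintype.card V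
  · exact ⟨P, hw, rfl, hN⟩
  push_neg at hN
  have hdec : ∀ k : Fin (P.length + 1),
      ∃ b, G.Walk G.s b (P.take k) ∧ G.Walk b G.t (P.drop k) := by
    intro k
    apply walk_decomp
    rw [List.take_append_drop]
    exact hw
  choose b hb1 hb2 using hdec
  have hcard : ∀ k : Fin (P.length + 1),
      (G.labelSet (P.take k)).card ≤ Fintype.card U := fun k =>
    le_trans (Finset.card_le_card (Finset.subset_univ _)) (le_of_eq Finset.card_univ)
  set f : Fin (P.length + 1) → V × Fin (Fintype.card U + 1) :=
    fun k => (b k, ⟨(G.labelSet (P.take k)).card, Nat.lt_succ_of_le (hcard k)⟩) with hf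
  have hlt : Fintype.card (V × Fin (Fintype.card U + 1)) < Fintype.card (Fin (P.length + 1)) := by
    simp only [Fintype.card_prod, Fintype.card_fin]
    rw [mul_comm] at hN
    omega
  obtain ⟨i, j, hne, hfeq⟩ := Fintype.exists_ne_map_eq_of_card_lt f hlt
  have key : ∀ i j : Fin (P.length + 1), (i : ℕ) < (j : ℕ) → f i = f j →
      ∃ Q : List E, G.Walk G.s G.t Q ∧ G.labelSet Q = G.labelSet P ∧
        Q.length ≤ (Fintype.card U + 1) * Fintype.card V := by
    intro i j hij hfe
    have hbij : b i = b j := congrArg Prod.fst hfe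
    have hcardeq : (G.labelSet (P.take i)).card = (G.labelSet (P.take j)).card := by
      have := congrArg (fun p => (p.2 : ℕ)) hfe
      simpa [hf] using this
    have hsub : G.labelSet (P.take i) ⊆ G.labelSet (P.take j) := by
      have ht : P.take (i : ℕ) = (P.take (j : ℕ)).take (i : ℕ) := by
        rw [List.take_take, Nat.min_eq_left (le_of_lt hij)]
      rw [ht]
      exact G.labelSet_sublist (List.take_sublist _ _)
    have hseteq : G.labelSet (P.take i) = G.labelSet (P.take j) :=
      Finset.eq_of_subset_of_card_le hsub (le_of_eq hcardeq.symm)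
    have hwalk : G.Walk G.s G.t (P.take (i : ℕ) ++ P.drop (j : ℕ)) :=
      (hb1 i).append (hbij ▸ hb2 j)
    have hlen2 : (P.take (i : ℕ) ++ P.drop (j : ℕ)).length < P.length := by
      have hi : (i : ℕ) ≤ P.length := by omega
      have hj : (j : ℕ) ≤ P.length := by omega
      simp only [List.length_append, List.length_take, List.length_drop]
      omega
    obtain ⟨Q, hQw, hQl, hQlen⟩ := ih _ hlen2 _ rfl hwalk
    refine ⟨Q, hQw, ?_, hQlen⟩
    rw [hQl]
    conv_rhs => rw [← List.take_append_drop (j : ℕ) P]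
    rw [labelSet_append, labelSet_append, hseteq]
  rcases hne.lt_or_gt with h | h
  · exact key i j h hfeq
  · exact key j i h hfeq.symm

end TransitionGraph

theorem stmt8 {V E U : Type*} [Fintype V] [Fintype E] [Fintype U] [DecidableEq U]
    (G : TransitionGraph V E U) :
    ∃ (nv ne : ℕ) (G' : TransitionGraph (Fin nv) (Fin ne) U),
      nv ≤ Fintype.card V * ((Fintype.card U + 1) * Fintype.card V + 1) + 1 ∧
      G'.Acyclic ∧ G'.labelFamily = G.labelFamily := by
  classical
  set L := (Fintype.card U + 1) * Fintype.card V with hLdef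
  set H := G.layered L with hH
  have hfam : H.labelFamily = G.labelFamily := by
    ext S
    constructor
    · rintro ⟨P', hw, rfl⟩
      rw [TransitionGraph.isSTPath_iff_walk] at hw
      obtain ⟨Q, hQ, hl⟩ := G.layered_down L P' G.s 0 hw
      exact ⟨Q, hQ, hl⟩
    · rintro ⟨P, hw, rfl⟩
      rw [TransitionGraph.isSTPath_iff_walk] at hw
      obtain ⟨Q, hQw, hQl, hQlen⟩ := G.shorten P.length P rfl hw
      obtain ⟨P', hP'w, hP'l⟩ := G.layered_up L Q G.s G.t 0 ⟨Q.length, by omega⟩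
        (by simp) hQw
      refine ⟨P' ++ [Sum.inr ⟨Q.length, by omega⟩], ?_, ?_⟩
      · rw [TransitionGraph.isSTPath_iff_walk]
        exact hP'w.append ((H.walk_singleton_iff _ _ _).mpr ⟨rfl, rfl⟩)
      · rw [TransitionGraph.labelSet_append, hP'l, hQl]
        have : H.labelSet [Sum.inr ⟨Q.length, by omega⟩] = ∅ := rfl
        rw [this, Finset.union_empty]
  refine ⟨Fintype.card (V × Fin (L + 1) ⊕ Unit), Fintype.card (E × Fin L ⊕ Fin (L + 1)),
    H.transport (Fintype.equivFin _) (Fintype.equivFin _), ?_, ?_, ?_⟩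
  · simp only [Fintype.card_sum, Fintype.card_prod, Fintype.card_fin, Fintype.card_unit]
    omega
  · apply TransitionGraph.acyclic_of_height _
      (fun x => match (Fintype.equivFin (V × Fin (L + 1) ⊕ Unit)).symm x with
        | .inl (_, i) => (i : ℕ)
        | .inr _ => L + 1)
    intro e
    simp only [TransitionGraph.transport, Equiv.symm_apply_apply]
    rcases (Fintype.equivFin (E × Fin L ⊕ Fin (L + 1))).symm e with ⟨e2, i⟩ | i
    · show ((Fin.castSucc i : Fin (L + 1)) : ℕ) < ((Fin.succ i : Fin (L + 1)) : ℕ)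
      simp
    · show ((i : Fin (L + 1)) : ℕ) < L + 1
      exact i.isLt
  · rw [TransitionGraph.labelFamily_transport]
    exact hfam
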